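/- Let λ > 0 and let N₁, N₂ be independent Poisson random variables, each with parameter λ. Then for every real x ≥ 0, P[N₁ − N₂ ≥ x] ≤ exp(−2λ · I(x/(2λ))), where I(y) := y·arsinh(y) − √(1+y²) + 1. -/

import Mathlib

open MeasureTheory ProbabilityTheory

lemma poisson_exp_hasSum (r : NNReal) (t : ℝ) :
    HasSum (fun n : ℕ => poissonPMFReal r n * Real.exp (t * n))
      (Real.exp (r * (Real.exp t - 1))) := by
  have h : (fun n : ℕ => poissonPMFReal r n * Real.exp (t * n)) =
      fun n : ℕ => Real.exp (-(r : ℝ)) * (((r : ℝ) * Real.exp t) ^ n / n.factorial) := by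
    funext n
    rw [poissonPMFReal, mul_pow, mul_comm t (n : ℝ), Real.exp_nat_mul]
    ring
  rw [h]
  have hs : HasSum (fun n : ℕ => ((r : ℝ) * Real.exp t) ^ n / n.factorial)
      (Real.exp ((r : ℝ) * Real.exp t)) := by
    rw [Real.exp_eq_exp_ℝ]
    exact NormedSpace.expSeries_div_hasSum_exp _
  have := hs.mul_left (Real.exp (-(r : ℝ)))
  rwa [← Real.exp_add, neg_add_eq_sub, show (r : ℝ) * Real.exp t - r = r * (Real.exp t - 1) by
    ring] at this

lemma poisson_exp_integrable (r : NNReal) (t : ℝ) :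
    Integrable (fun n : ℕ => Real.exp (t * n)) (poissonMeasure r) := by
  constructor
  · exact Measurable.aestronglyMeasurable (by measurability)
  · rw [HasFiniteIntegral]
    have hsingle : ∀ n : ℕ, poissonMeasure r {n} = ENNReal.ofReal (poissonPMFReal r n) := by
      intro n
      rw [poissonMeasure_singleton]
      rfl
    calc ∫⁻ n, ‖Real.exp (t * n)‖₊ ∂(poissonMeasure r)
        = ∑' n : ℕ, ‖Real.exp (t * n)‖₊ * poissonMeasure r {n} :=
          lintegral_countable' _
      _ = ∑' n : ℕ, ENNReal.ofReal (poissonPMFReal r n * Real.exp (t * n)) := by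
          congr 1; funext n
          rw [hsingle n, ← enorm_eq_nnnorm, Real.enorm_eq_ofReal (Real.exp_nonneg _),
            ← ENNReal.ofReal_mul (Real.exp_nonneg _), mul_comm]
      _ = ENNReal.ofReal (∑' n : ℕ, poissonPMFReal r n * Real.exp (t * n)) := by
          rw [ENNReal.ofReal_tsum_of_nonneg
            (fun n => mul_nonneg poissonPMFReal_nonneg (Real.exp_nonneg _))
            (poisson_exp_hasSum r t).summable]
      _ < ⊤ := ENNReal.ofReal_lt_top

lemma poisson_mgf {Ω : Type*} [MeasurableSpace Ω] (μ : Measure Ω) (r : NNReal)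
    (N : Ω → ℕ) (hN : Measurable N) (hd : μ.map N = poissonMeasure r) (t : ℝ) :
    Integrable (fun ω => Real.exp (t * (N ω : ℝ))) μ ∧
      ∫ ω, Real.exp (t * (N ω : ℝ)) ∂μ = Real.exp (r * (Real.exp t - 1)) := by
  have hf : Measurable (fun n : ℕ => Real.exp (t * n)) := by measurability
  have hint : Integrable (fun ω => Real.exp (t * (N ω : ℝ))) μ := by
    have := (integrable_map_measure
      (hf.aestronglyMeasurable (μ := μ.map N)) hN.aemeasurable).mp
      (by rw [hd]; exact poisson_exp_integrable r t)
    exact this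
  refine ⟨hint, ?_⟩
  have hmap : ∫ ω, Real.exp (t * (N ω : ℝ)) ∂μ
      = ∫ n : ℕ, Real.exp (t * n) ∂(poissonMeasure r) := by
    rw [← hd, integral_map hN.aemeasurable (hf.aestronglyMeasurable)]
  rw [hmap, integral_poissonMeasure' (poisson_exp_integrable r t)]
  have htoReal : ∀ n : ℕ, (poissonPMF r n).toReal = poissonPMFReal r n := fun n =>
    ENNReal.toReal_ofReal poissonPMFReal_nonneg
  calc ∑' n : ℕ, (Real.exp (-(r : ℝ)) * (r : ℝ) ^ n / (n.factorial : ℝ)) • Real.exp (t * n)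
      = ∑' n : ℕ, poissonPMFReal r n * Real.exp (t * n) := by
        congr 1
    _ = Real.exp (r * (Real.exp t - 1)) := (poisson_exp_hasSum r t).tsum_eq

/-- Chernoff bound for the difference of two independent Poisson(λ) random variables:
`P[N₁ − N₂ ≥ x] ≤ exp(−2λ I(x/(2λ)))` for `x ≥ 0`, where
`I(y) = y arsinh y − √(1+y²) + 1`. -/
theorem poisson_difference_tail_bound {Ω : Type*} [MeasurableSpace Ω]
    (μ : Measure Ω) [IsProbabilityMeasure μ]
    (lam : NNReal) (hlam : 0 < lam)
    (N₁ N₂ : Ω → ℕ) (h₁ : Measurable N₁) (h₂ : Measurable N₂)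
    (hindep : IndepFun N₁ N₂ μ)
    (hd₁ : μ.map N₁ = poissonMeasure lam)
    (hd₂ : μ.map N₂ = poissonMeasure lam) :
    ∀ x : ℝ, 0 ≤ x →
      (μ {ω | x ≤ (N₁ ω : ℝ) - (N₂ ω : ℝ)}).toReal ≤
        Real.exp (-(2 * lam) *
          (let y := x / (2 * lam);
            y * Real.arsinh y - Real.sqrt (1 + y ^ 2) + 1)) := by
  intro x hx
  have h2lam : (0 : ℝ) < 2 * lam := by positivity
  set y : ℝ := x / (2 * lam) with hy
  set t : ℝ := Real.arsinh y with ht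
  have hy0 : 0 ≤ y := div_nonneg hx h2lam.le
  have ht0 : 0 ≤ t := Real.arsinh_nonneg_iff.mpr hy0
  set X : Ω → ℝ := fun ω => (N₁ ω : ℝ) with hX
  set Y : Ω → ℝ := fun ω => -(N₂ ω : ℝ) with hY
  have hmX : Measurable X := measurable_from_top.comp h₁
  have hmY : Measurable Y := Measurable.comp (g := fun n : ℕ => -(n : ℝ)) measurable_from_top h₂
  have hindep' : IndepFun X Y μ :=
    hindep.comp (φ := fun n : ℕ => (n : ℝ)) (ψ := fun n : ℕ => -(n : ℝ))
      measurable_from_top measurable_from_top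
  have hm1 := poisson_mgf μ lam N₁ h₁ hd₁ t
  have hm2 := poisson_mgf μ lam N₂ h₂ hd₂ (-t)
  have hYexp : (fun ω => Real.exp (t * Y ω)) = fun ω => Real.exp ((-t) * (N₂ ω : ℝ)) := by
    funext ω; rw [hY]; ring_nf
  have hintY : Integrable (fun ω => Real.exp (t * Y ω)) μ := by rw [hYexp]; exact hm2.1
  have hintXY : Integrable (fun ω => Real.exp (t * (X + Y) ω)) μ :=
    hindep'.integrable_exp_mul_add hm1.1 hintY
  have hcher := measure_ge_le_exp_mul_mgf (X := X + Y) (μ := μ) x ht0 hintXY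
  have hmgf : mgf (X + Y) μ t =
      Real.exp (lam * (Real.exp t - 1)) * Real.exp (lam * (Real.exp (-t) - 1)) := by
    rw [hindep'.mgf_add' hmX.aestronglyMeasurable hmY.aestronglyMeasurable]
    congr 1
    · exact hm1.2
    · show ∫ ω, Real.exp (t * Y ω) ∂μ = _
      rw [hYexp]; exact hm2.2
  have hset : {ω | x ≤ (X + Y) ω} = {ω | x ≤ (N₁ ω : ℝ) - (N₂ ω : ℝ)} := by
    ext ω; simp [hX, hY, sub_eq_add_neg]
  rw [hset, hmgf, ← Real.exp_add, ← Real.exp_add] at hcher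
  refine hcher.trans (le_of_eq ?_)
  congr 1
  have hxy : x = 2 * (lam : ℝ) * y := by
    rw [hy]; field_simp
  have hcosh : Real.exp t + Real.exp (-t) = 2 * Real.sqrt (1 + y ^ 2) := by
    have := Real.cosh_arsinh y
    rw [Real.cosh_eq] at this
    linarith
  show -t * x + ((lam : ℝ) * (Real.exp t - 1) + (lam : ℝ) * (Real.exp (-t) - 1)) = _
  simp only []
  rw [hxy]
  nlinarith [hcosh]
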